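/- Let P be an N×N stochastic matrix (all entries nonnegative, each row summing to 1) with all entries strictly positive, and let δ = min over i,j of P i j. Then for any two probability vectors μ and ν on {1,…,N}, the total variation distance between μP and νP satisfies ‖μP − νP‖₁ ≤ (1 − Nδ)·‖μ − ν‖₁ (when Nδ ≤ 1). -/
import Mathlib


theorem markov_l1_contraction (N : ℕ) (P : Matrix (Fin N) (Fin N) ℝ)
    (hpos : ∀ i j, 0 < P i j) (hrow : ∀ i, ∑ j, P i j = 1)
    (δ : ℝ) (hδ : IsLeast (Set.range fun p : Fin N × Fin N => P p.1 p.2) δ)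
    (hNδ : (N : ℝ) * δ ≤ 1)
    (μ ν : Fin N → ℝ) (hμ0 : ∀ i, 0 ≤ μ i) (hμ1 : ∑ i, μ i = 1)
    (hν0 : ∀ i, 0 ≤ ν i) (hν1 : ∑ i, ν i = 1) :
    ∑ j, |(∑ i, μ i * P i j) - (∑ i, ν i * P i j)| ≤
      (1 - (N : ℝ) * δ) * ∑ i, |μ i - ν i| := by
  have hδ0 : ∀ i j, δ ≤ P i j := fun i j => hδ.2 ⟨(i, j), rfl⟩
  have key : ∀ j, (∑ i, μ i * P i j) - (∑ i, ν i * P i j)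
      = ∑ i, (μ i - ν i) * (P i j - δ) := by
    intro j
    have h : ∑ i, (μ i - ν i) * (P i j - δ)
        = ((∑ i, μ i * P i j) - (∑ i, ν i * P i j))
          - δ * ((∑ i, μ i) - ∑ i, ν i) := by
      simp only [sub_mul, mul_sub, Finset.sum_sub_distrib, ← Finset.mul_sum,
        ← Finset.sum_mul, mul_comm δ]
    rw [h, hμ1, hν1]; ring
  calc ∑ j, |(∑ i, μ i * P i j) - (∑ i, ν i * P i j)|
      ≤ ∑ j, ∑ i, |μ i - ν i| * (P i j - δ) := by
        refine Finset.sum_le_sum fun j _ => ?_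
        rw [key j]
        refine (Finset.abs_sum_le_sum_abs _ _).trans (Finset.sum_le_sum fun i _ => ?_)
        rw [abs_mul, abs_of_nonneg (sub_nonneg.2 (hδ0 i j))]
    _ = (1 - (N : ℝ) * δ) * ∑ i, |μ i - ν i| := by
        rw [Finset.sum_comm, Finset.mul_sum]
        refine Finset.sum_congr rfl fun i _ => ?_
        rw [← Finset.mul_sum, Finset.sum_sub_distrib, hrow]
        simp [Finset.sum_const, Finset.card_fin]
        ring
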